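/- Suppose the system is critically loaded (Leff(ρ) = 1) and ΞΓρ > 0 componentwise. Then for every (n,q) ∈ ℝ₊^ℱ × ℝ₊^ℰ, a state (n',q') ∈ ℝ₊^ℱ × ℝ₊^ℰ is feasible for the optimization problem ALGP(n,q) (i.e., there exist t ≥ 0, x ∈ [0,C]^ℱ and σ ∈ Λ with n' = n + t[ν − diag(μ)x] and q' = q + t[Γx − (I − Rᵀ)σ]) if and only if it is feasible for bALGD(n,q) (i.e., w_ζ(n',q') ≥ w_ζ(n,q) for all ζ ∈ CR*(ρ)). -/

import Mathlib

open Matrix Filter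

/-- Network data: queues `E`, flow types `F`, routing matrix, schedule set,
ingress map, arrival/departure parameters. -/
structure Network (E F : Type*) [Fintype E] [Fintype F] [DecidableEq E] where
  R : Matrix E E ℝ
  S : Finset (E → ℝ)
  iota : F → E
  ν : F → ℝ
  μ : F → ℝ
  C : ℝ
  hR01 : ∀ e e', R e e' = 0 ∨ R e e' = 1
  hRrow : ∀ e e₁ e₂, R e e₁ ≠ 0 → R e e₂ ≠ 0 → e₁ = e₂
  hRnil : IsNilpotent R
  hS01 : ∀ σ ∈ S, ∀ e, σ e = 0 ∨ σ e = 1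
  hS0 : (0 : E → ℝ) ∈ S
  hSmono : ∀ σ ∈ S, ∀ σ' : E → ℝ, (∀ e, σ' e = 0 ∨ σ' e = 1) → (∀ e, σ' e ≤ σ e) → σ' ∈ S
  hSsingle : ∀ e : E, (fun e' => if e' = e then (1 : ℝ) else 0) ∈ S
  hν : ∀ f, 0 < ν f
  hμ0 : ∀ f, 0 < μ f
  hμ1 : ∀ f, μ f < 1
  hC : ∀ f, ν f / μ f < C

namespace Network

variable {E F : Type*} [Fintype E] [Fintype F] [DecidableEq E] (N : Network E F)

/-- offered load `ρ_f = ν_f / μ_f`. -/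
noncomputable def rho : F → ℝ := fun f => N.ν f / N.μ f

/-- `Ξ = (I - Rᵀ)⁻¹`. -/
noncomputable def Xi : Matrix E E ℝ := (1 - N.R.transpose)⁻¹

/-- ingress matrix `Γ`. -/
noncomputable def Gam : Matrix E F ℝ := Matrix.of fun e f => if N.iota f = e then (1 : ℝ) else 0

/-- implied load `λ = Ξ Γ ρ`. -/
noncomputable def lamv : E → ℝ := N.Xi *ᵥ (N.Gam *ᵥ N.rho)

/-- `Π s`, the vector of service rates induced by schedule weights `s`. -/
def PiV (s : (E → ℝ) → ℝ) : E → ℝ := fun e => ∑ σ ∈ N.S, s σ * σ e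

/-- the primal LP value `PRIMAL(l)`. -/
noncomputable def PRIMAL (l : E → ℝ) : ℝ :=
  sInf { v | ∃ s : (E → ℝ) → ℝ, (∀ σ, 0 ≤ s σ) ∧ (∀ e, l e ≤ N.PiV s e) ∧
    v = ∑ σ ∈ N.S, s σ }

/-- effective load `Leff(ρ) = PRIMAL(ΞΓρ)`. -/
noncomputable def Leff : ℝ := N.PRIMAL N.lamv

/-- feasibility for the dual LP. -/
def dualFeasible (ζ : E → ℝ) : Prop :=
  (∀ e, 0 ≤ ζ e) ∧ ∀ σ ∈ N.S, ∑ e, ζ e * σ e ≤ 1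

/-- the dual LP value `DUAL(l)`. -/
noncomputable def DUAL (l : E → ℝ) : ℝ :=
  sSup { v | ∃ ζ : E → ℝ, N.dualFeasible ζ ∧ v = ∑ e, l e * ζ e }

/-- `CR(ρ)`: the critical virtual resources (optimal solutions of `DUAL(ΞΓρ)`). -/
def CR : Set (E → ℝ) :=
  { ζ | N.dualFeasible ζ ∧ ∑ e, N.lamv e * ζ e = N.DUAL N.lamv }

/-- `CR*(ρ)`: extreme points of `CR(ρ)`. -/
noncomputable def CRstar : Set (E → ℝ) := Set.extremePoints ℝ N.CR

/-- workload `w_ζ(n,q) = ζᵀ Ξ [q + Γ diag(μ)⁻¹ n]`. -/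
noncomputable def workload (ζ : E → ℝ) (n : F → ℝ) (q : E → ℝ) : ℝ :=
  ∑ e, ζ e * (N.Xi *ᵥ (q + N.Gam *ᵥ fun f => n f / N.μ f)) e

/-- cost `c(n,q) = Σ_f n_f/μ_f + Σ_e q_e`. -/
noncomputable def cost (n : F → ℝ) (q : E → ℝ) : ℝ :=
  ∑ f, n f / N.μ f + ∑ e, q e

/-- Lyapunov function `L_α(n,q)`. -/
noncomputable def Lyap (α : ℝ) (n : F → ℝ) (q : E → ℝ) : ℝ :=
  ∑ f, n f ^ (1 + α) / (N.μ f * N.rho f ^ α) + ∑ e, q e ^ (1 + α)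

/-- back-pressure weight of a schedule `σ`: `σᵀ (I - R) q^α`. -/
noncomputable def weight (α : ℝ) (q : E → ℝ) (σ : E → ℝ) : ℝ :=
  ∑ e, σ e * ((1 - N.R) *ᵥ fun e' => q e' ^ α) e

theorem S_nonempty : N.S.Nonempty := ⟨0, N.hS0⟩

/-- the maximum back-pressure weight. -/
noncomputable def maxWeight (α : ℝ) (q : E → ℝ) : ℝ :=
  N.S.sup' N.S_nonempty (N.weight α q)

/-- feasibility for problem `bALGD(n,q)`. -/
def bALGDFeas (n : F → ℝ) (q : E → ℝ) (p : (F → ℝ) × (E → ℝ)) : Prop :=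
  (∀ f, 0 ≤ p.1 f) ∧ (∀ e, 0 ≤ p.2 e) ∧
    ∀ ζ ∈ N.CRstar, N.workload ζ n q ≤ N.workload ζ p.1 p.2

/-- optimality for problem `bALGD(n,q)`. -/
def bALGDOpt (α : ℝ) (n : F → ℝ) (q : E → ℝ) (p : (F → ℝ) × (E → ℝ)) : Prop :=
  N.bALGDFeas n q p ∧ ∀ p', N.bALGDFeas n q p' → N.Lyap α p.1 p.2 ≤ N.Lyap α p'.1 p'.2

/-- the lifting map `Δ`: the unique optimal solution of `bALGD(n,q)`. -/
noncomputable def lift (α : ℝ) (p : (F → ℝ) × (E → ℝ)) : (F → ℝ) × (E → ℝ) :=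
  letI := Classical.dec (∃! p', N.bALGDOpt α p.1 p.2 p')
  if h : ∃! p', N.bALGDOpt α p.1 p.2 p' then h.choose else p

/-- the effective cost `c*(n,q)`. -/
noncomputable def effCost (n : F → ℝ) (q : E → ℝ) : ℝ :=
  sInf { v | ∃ p : (F → ℝ) × (E → ℝ), N.bALGDFeas n q p ∧ v = N.cost p.1 p.2 }

/-- the balance factor `γ(ρ)`. -/
noncomputable def balance : ℝ :=
  sInf { v | ∃ (n : F → ℝ) (q : E → ℝ) (p : (F → ℝ) × (E → ℝ)),
    (∀ f, 0 ≤ n f) ∧ (∀ e, 0 ≤ q e) ∧ N.bALGDFeas n q p ∧ N.cost n q = 1 ∧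
    v = N.cost p.1 p.2 }

/-- the scheduling capacity region `Λ`. -/
def LamSet : Set (E → ℝ) :=
  { l | (∀ e, 0 ≤ l e) ∧ ∃ s : (E → ℝ) → ℝ, (∀ σ, 0 ≤ s σ) ∧
    (∀ e, l e ≤ N.PiV s e) ∧ ∑ σ ∈ N.S, s σ ≤ 1 }

end Network

/-- ℓ1-distance between two states. -/
noncomputable def dist1 {E F : Type*} [Fintype E] [Fintype F]
    (p p' : (F → ℝ) × (E → ℝ)) : ℝ :=
  ∑ f, |p.1 f - p'.1 f| + ∑ e, |p.2 e - p'.2 e|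

/-- A fluid model solution on `[0,T]` (algorithm-independent equations (F1)-(F8)). -/
structure FMS {E F : Type*} [Fintype E] [Fintype F] [DecidableEq E]
    (N : Network E F) (T : ℝ) where
  q : ℝ → E → ℝ
  z : ℝ → E → ℝ
  n : ℝ → F → ℝ
  s : ℝ → (E → ℝ) → ℝ
  xbar : ℝ → F → ℝ
  fa : ℝ → F → ℝ
  d : ℝ → F → ℝ
  a : ℝ → F → ℝ
  lip_q : ∀ e, ∃ K : NNReal, LipschitzOnWith K (fun t => q t e) (Set.Icc 0 T)
  lip_z : ∀ e, ∃ K : NNReal, LipschitzOnWith K (fun t => z t e) (Set.Icc 0 T)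
  lip_n : ∀ f, ∃ K : NNReal, LipschitzOnWith K (fun t => n t f) (Set.Icc 0 T)
  lip_s : ∀ σ, ∃ K : NNReal, LipschitzOnWith K (fun t => s t σ) (Set.Icc 0 T)
  lip_xbar : ∀ f, ∃ K : NNReal, LipschitzOnWith K (fun t => xbar t f) (Set.Icc 0 T)
  lip_fa : ∀ f, ∃ K : NNReal, LipschitzOnWith K (fun t => fa t f) (Set.Icc 0 T)
  lip_d : ∀ f, ∃ K : NNReal, LipschitzOnWith K (fun t => d t f) (Set.Icc 0 T)
  lip_a : ∀ f, ∃ K : NNReal, LipschitzOnWith K (fun t => a t f) (Set.Icc 0 T)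
  nonneg_q : ∀ t ∈ Set.Icc 0 T, ∀ e, 0 ≤ q t e
  nonneg_z : ∀ t ∈ Set.Icc 0 T, ∀ e, 0 ≤ z t e
  nonneg_n : ∀ t ∈ Set.Icc 0 T, ∀ f, 0 ≤ n t f
  nonneg_s : ∀ t ∈ Set.Icc 0 T, ∀ σ, 0 ≤ s t σ
  supp_s : ∀ t ∈ Set.Icc 0 T, ∀ σ ∉ N.S, s t σ = 0
  nonneg_xbar : ∀ t ∈ Set.Icc 0 T, ∀ f, 0 ≤ xbar t f
  nonneg_fa : ∀ t ∈ Set.Icc 0 T, ∀ f, 0 ≤ fa t f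
  nonneg_d : ∀ t ∈ Set.Icc 0 T, ∀ f, 0 ≤ d t f
  nonneg_a : ∀ t ∈ Set.Icc 0 T, ∀ f, 0 ≤ a t f
  eq_n : ∀ t ∈ Set.Icc 0 T, ∀ f, n t f = n 0 f + fa t f - d t f
  eq_fa : ∀ t ∈ Set.Icc 0 T, ∀ f, fa t f = N.ν f * t
  eq_d : ∀ t ∈ Set.Icc 0 T, ∀ f, d t f = N.μ f * xbar t f
  eq_q : ∀ t ∈ Set.Icc 0 T, ∀ e, q t e = q 0 e
      - ((1 - N.R.transpose) *ᵥ N.PiV (s t)) e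
      + ((1 - N.R.transpose) *ᵥ z t) e
      + (N.Gam *ᵥ a t) e
  eq_a : ∀ t ∈ Set.Icc 0 T, ∀ f, a t f = xbar t f
  eq_s : ∀ t ∈ Set.Icc 0 T, ∑ σ ∈ N.S, s t σ = t
  mono_z : ∀ t₁ ∈ Set.Icc 0 T, ∀ t₂ ∈ Set.Icc 0 T, t₁ ≤ t₂ → ∀ e, z t₁ e ≤ z t₂ e
  mono_s : ∀ t₁ ∈ Set.Icc 0 T, ∀ t₂ ∈ Set.Icc 0 T, t₁ ≤ t₂ → ∀ σ, s t₁ σ ≤ s t₂ σ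
  mono_xbar : ∀ t₁ ∈ Set.Icc 0 T, ∀ t₂ ∈ Set.Icc 0 T, t₁ ≤ t₂ → ∀ f, xbar t₁ f ≤ xbar t₂ f

namespace FMS

variable {E F : Type*} [Fintype E] [Fintype F] [DecidableEq E] {N : Network E F} {T : ℝ}

/-- a regular point: all components are differentiable at `t ∈ (0,T)`. -/
def Regular (Φ : FMS N T) (t : ℝ) : Prop :=
  t ∈ Set.Ioo 0 T ∧
  (∀ e, DifferentiableAt ℝ (fun u => Φ.q u e) t) ∧
  (∀ e, DifferentiableAt ℝ (fun u => Φ.z u e) t) ∧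
  (∀ f, DifferentiableAt ℝ (fun u => Φ.n u f) t) ∧
  (∀ σ, DifferentiableAt ℝ (fun u => Φ.s u σ) t) ∧
  (∀ f, DifferentiableAt ℝ (fun u => Φ.xbar u f) t) ∧
  (∀ f, DifferentiableAt ℝ (fun u => Φ.fa u f) t) ∧
  (∀ f, DifferentiableAt ℝ (fun u => Φ.d u f) t) ∧
  (∀ f, DifferentiableAt ℝ (fun u => Φ.a u f) t)

/-- the instantaneous rate `x_f(t) = (d/dt) x̄_f(t)`. -/
noncomputable def rate (Φ : FMS N T) (t : ℝ) (f : F) : ℝ := deriv (fun u => Φ.xbar u f) t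

/-- the α-fair objective `x^{1-α} n^α/(1-α) - q^α x`. -/
noncomputable def obj (α nf qf x : ℝ) : ℝ := x ^ (1 - α) * nf ^ α / (1 - α) - qf ^ α * x

/-- the MWUM-α conditions (F9)-(F12). -/
def IsMWUM (Φ : FMS N T) (α : ℝ) : Prop :=
  (∀ t ∈ Set.Icc (0 : ℝ) T, ∀ e, Φ.z t e = 0) ∧
  ∀ t, Φ.Regular t →
    ((∀ f, (0 < Φ.n t f →
        Φ.rate t f ∈ Set.Icc (0 : ℝ) N.C ∧
        ∀ y ∈ Set.Icc (0 : ℝ) N.C,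
          obj α (Φ.n t f) (Φ.q t (N.iota f)) y ≤
            obj α (Φ.n t f) (Φ.q t (N.iota f)) (Φ.rate t f)) ∧
      (Φ.n t f = 0 → Φ.rate t f = N.rho f)) ∧
    (∀ π ∈ N.S, N.weight α (Φ.q t) π < N.maxWeight α (Φ.q t) →
        deriv (fun u => Φ.s u π) t = 0) ∧
    (∀ f, Φ.n t f = 0 → Φ.q t (N.iota f) = 0))

end FMS


section PolyAux
variable {E ι : Type*} [Fintype E] [Fintype ι]

lemma extremePoints_polyhedron_finite (a : ι → E → ℝ) (b : ι → ℝ) :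
    (Set.extremePoints ℝ {x : E → ℝ | ∀ i, ∑ e, a i e * x e ≤ b i}).Finite := by
  set P : Set (E → ℝ) := {x : E → ℝ | ∀ i, ∑ e, a i e * x e ≤ b i} with hP
  set act : (E → ℝ) → Set ι := fun x => {i | ∑ e, a i e * x e = b i} with hact
  have key : Set.InjOn act (Set.extremePoints ℝ P) := by
    rintro x hx y hy hxy
    by_contra hne
    set d : E → ℝ := y - x with hd
    have hd0 : d ≠ 0 := sub_ne_zero.2 (Ne.symm hne)
    have hev : ∀ᶠ δ in nhdsWithin (0:ℝ) (Set.Ioi 0),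
        ∀ i, (∑ e, a i e * x e) + δ * |∑ e, a i e * d e| ≤ b i := by
      rw [Filter.eventually_all]
      intro i
      rcases eq_or_lt_of_le (hx.1 i) with heq | hlt
      · have hyact : ∑ e, a i e * y e = b i := by
          have h1 : i ∈ act x := heq
          rw [hxy] at h1; exact h1
        have hzero : ∑ e, a i e * d e = 0 := by
          have h2 : ∑ e, a i e * d e = (∑ e, a i e * y e) - ∑ e, a i e * x e := by
            rw [← Finset.sum_sub_distrib]; congr 1; ext e
            simp only [hd, Pi.sub_apply]; ring
          rw [h2, hyact, ← heq]; ring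
        filter_upwards with δ
        simp [hzero, ← heq]
      · have h3 : Filter.Tendsto (fun δ : ℝ => (∑ e, a i e * x e) + δ * |∑ e, a i e * d e|)
            (nhdsWithin (0:ℝ) (Set.Ioi 0))
            (nhds ((∑ e, a i e * x e) + 0 * |∑ e, a i e * d e|)) := by
          apply Filter.Tendsto.mono_left _ nhdsWithin_le_nhds
          exact (Filter.tendsto_id.mul_const _).const_add _
        simp only [zero_mul, add_zero] at h3
        exact h3.eventually_le_const hlt
    obtain ⟨δ, hδ, hδpos⟩ := (hev.and (eventually_mem_nhdsWithin)).exists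
    rw [Set.mem_Ioi] at hδpos
    have hmem : ∀ s : ℝ, |s| = 1 → x + (s * δ) • d ∈ P := by
      intro s hs i
      have hcalc : ∑ e, a i e * (x + (s * δ) • d) e =
          (∑ e, a i e * x e) + (s * δ) * (∑ e, a i e * d e) := by
        rw [Finset.mul_sum, ← Finset.sum_add_distrib]
        congr 1; ext e; simp only [Pi.add_apply, Pi.smul_apply, smul_eq_mul]; ring
      rw [hcalc]
      calc (∑ e, a i e * x e) + (s * δ) * (∑ e, a i e * d e)
          ≤ (∑ e, a i e * x e) + δ * |∑ e, a i e * d e| := by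
            gcongr _ + ?_
            calc (s * δ) * (∑ e, a i e * d e) ≤ |(s * δ) * (∑ e, a i e * d e)| := le_abs_self _
            _ = δ * |∑ e, a i e * d e| := by
                rw [abs_mul, abs_mul, hs, one_mul, abs_of_pos hδpos]
        _ ≤ b i := hδ i
    have h1 : x + (1 * δ) • d ∈ P := hmem 1 (by norm_num)
    have h2 : x + ((-1) * δ) • d ∈ P := hmem (-1) (by norm_num)
    have hseg : x ∈ openSegment ℝ (x + ((-1) * δ) • d) (x + (1 * δ) • d) := by
      refine ⟨1/2, 1/2, by norm_num, by norm_num, by norm_num, ?_⟩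
      ext e
      simp only [Pi.add_apply, Pi.smul_apply, smul_eq_mul]
      ring
    have hδd : ((1:ℝ) * δ) • d = 0 := by
      have h4 : x + (1 * δ) • d = x := hx.2 h1 h2 (by rw [openSegment_symm]; exact hseg)
      exact add_eq_left.mp h4
    rw [smul_eq_zero] at hδd
    rcases hδd with h | h
    · simp at h; exact absurd h (ne_of_gt hδpos)
    · exact hd0 h
  have himg : (act '' Set.extremePoints ℝ P).Finite := Set.toFinite _
  exact Set.Finite.of_finite_image himg key

end PolyAux

namespace Network

variable {E F : Type*} [Fintype E] [Fintype F] [DecidableEq E] (N : Network E F)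

lemma sigma_nonneg {σ : E → ℝ} (hσ : σ ∈ N.S) (e : E) : 0 ≤ σ e := by
  rcases N.hS01 σ hσ e with h | h <;> simp [h]

lemma sigma_le_one {σ : E → ℝ} (hσ : σ ∈ N.S) (e : E) : σ e ≤ 1 := by
  rcases N.hS01 σ hσ e with h | h <;> simp [h]

lemma dualFeasible_zero : N.dualFeasible 0 := by
  constructor
  · intro e; simp
  · intro σ _; simp

/-- weak-duality pairing bound. -/
lemma pairing_le {ζ l : E → ℝ} {s : (E → ℝ) → ℝ} (hζ : N.dualFeasible ζ)
    (hs0 : ∀ σ, 0 ≤ s σ) (hfeas : ∀ e, l e ≤ N.PiV s e) :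
    ∑ e, l e * ζ e ≤ ∑ σ ∈ N.S, s σ := by
  have h1 : ∑ e, l e * ζ e ≤ ∑ e, N.PiV s e * ζ e := by
    apply Finset.sum_le_sum
    intro e _
    exact mul_le_mul_of_nonneg_right (hfeas e) (hζ.1 e)
  have h2 : ∑ e, N.PiV s e * ζ e = ∑ σ ∈ N.S, s σ * ∑ e, ζ e * σ e := by
    simp only [PiV, Finset.sum_mul]
    rw [Finset.sum_comm]
    congr 1; ext σ
    rw [Finset.mul_sum]
    congr 1; ext e; ring
  have h3 : ∑ σ ∈ N.S, s σ * ∑ e, ζ e * σ e ≤ ∑ σ ∈ N.S, s σ := by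
    apply Finset.sum_le_sum
    intro σ hσ
    nth_rewrite 2 [show s σ = s σ * 1 by ring]
    exact mul_le_mul_of_nonneg_left (hζ.2 σ hσ) (hs0 σ)
  linarith

/-- the primal value set is nonempty. -/
lemma primal_nonempty (l : E → ℝ) :
    ∃ v, v ∈ { v | ∃ s : (E → ℝ) → ℝ, (∀ σ, 0 ≤ s σ) ∧ (∀ e, l e ≤ N.PiV s e) ∧
      v = ∑ σ ∈ N.S, s σ } := by
  set M : ℝ := 1 + ∑ e, |l e| with hM
  have hM0 : 0 ≤ M := by
    have : (0:ℝ) ≤ ∑ e, |l e| := Finset.sum_nonneg fun e _ => abs_nonneg _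
    linarith
  refine ⟨∑ σ ∈ N.S, (fun _ => M) σ, (fun _ => M), fun _ => hM0, fun e => ?_, rfl⟩
  have hle : M * 1 ≤ N.PiV (fun _ => M) e := by
    have := Finset.single_le_sum (f := fun σ : E → ℝ => M * σ e)
      (fun σ hσ => mul_nonneg hM0 (N.sigma_nonneg hσ e)) (N.hSsingle e)
    simpa [PiV] using this
  have hl : l e ≤ M := by
    have h1 : l e ≤ |l e| := le_abs_self _
    have h2 : |l e| ≤ ∑ e', |l e'| :=
      Finset.single_le_sum (f := fun e' => |l e'|) (fun _ _ => abs_nonneg _) (Finset.mem_univ e)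
    linarith
  simpa using hl.trans (by simpa using hle)

lemma primal_bddBelow (l : E → ℝ) :
    BddBelow { v | ∃ s : (E → ℝ) → ℝ, (∀ σ, 0 ≤ s σ) ∧ (∀ e, l e ≤ N.PiV s e) ∧
      v = ∑ σ ∈ N.S, s σ } := by
  refine ⟨0, fun v hv => ?_⟩
  obtain ⟨s, hs0, _, rfl⟩ := hv
  exact Finset.sum_nonneg fun σ _ => hs0 σ

/-- weak duality at the critical load. -/
lemma weak_duality (hcrit : N.Leff = 1) {ζ : E → ℝ} (hζ : N.dualFeasible ζ) :
    ∑ e, N.lamv e * ζ e ≤ 1 := by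
  have h : ∑ e, N.lamv e * ζ e ≤ N.PRIMAL N.lamv := by
    apply le_csInf ⟨_, N.primal_nonempty N.lamv |>.choose_spec⟩
    rintro v ⟨s, hs0, hfeas, rfl⟩
    exact N.pairing_le hζ hs0 hfeas
  rwa [show N.PRIMAL N.lamv = N.Leff from rfl, hcrit] at h

lemma LamSet_pair_le {ζ σ : E → ℝ} (hζ : N.dualFeasible ζ) (hσ : σ ∈ N.LamSet) :
    ∑ e, σ e * ζ e ≤ 1 := by
  obtain ⟨_, s, hs0, hfeas, hsum⟩ := hσ
  exact (N.pairing_le hζ hs0 hfeas).trans hsum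

/-- strict separation from `conv S` by a dual-feasible vector. -/
lemma exists_dual_gt {x : E → ℝ} (hx0 : ∀ e, 0 ≤ x e)
    (hx : x ∉ convexHull ℝ (↑N.S : Set (E → ℝ))) :
    ∃ ζ : E → ℝ, N.dualFeasible ζ ∧ 1 < ∑ e, x e * ζ e := by
  have hconv : Convex ℝ (convexHull ℝ (↑N.S : Set (E → ℝ))) := convex_convexHull _ _
  have hclosed : IsClosed (convexHull ℝ (↑N.S : Set (E → ℝ))) :=
    (N.S.finite_toSet.isCompact_convexHull (𝕜 := ℝ)).isClosed
  obtain ⟨f, u, hfu, hux⟩ := geometric_hahn_banach_closed_point hconv hclosed hx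
  set g : E → ℝ := fun e => f (Pi.single e 1) with hg
  have hfx : ∀ y : E → ℝ, f y = ∑ e, g e * y e := by
    intro y
    have hy : y = ∑ e, y e • (Pi.single e (1:ℝ) : E → ℝ) := by
      ext e'
      rw [Finset.sum_apply]
      simp [Pi.single_apply]
    calc f y = f (∑ e, y e • (Pi.single e (1:ℝ) : E → ℝ)) := by rw [← hy]
      _ = ∑ e, y e * g e := by
          rw [map_sum]
          congr 1; ext e
          rw [f.map_smul]
          simp [hg]
      _ = ∑ e, g e * y e := by congr 1; ext e; ring
  set gp : E → ℝ := fun e => max (g e) 0 with hgp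
  have hσS : ∀ σ ∈ N.S, ∑ e, gp e * σ e < u := by
    intro σ hσ
    set σ' : E → ℝ := fun e => if 0 ≤ g e then σ e else 0 with hσ'
    have hσ'S : σ' ∈ N.S := by
      apply N.hSmono σ hσ
      · intro e; by_cases h : 0 ≤ g e
        · simp only [hσ', if_pos h]; exact N.hS01 σ hσ e
        · simp [hσ', if_neg h]
      · intro e; by_cases h : 0 ≤ g e
        · simp [hσ', if_pos h]
        · simp only [hσ', if_neg h]; exact N.sigma_nonneg hσ e
    have heq : ∑ e, gp e * σ e = ∑ e, g e * σ' e := by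
      congr 1; ext e
      by_cases h : 0 ≤ g e
      · simp [hgp, hσ', if_pos h, max_eq_left h]
      · simp [hgp, hσ', if_neg h, max_eq_right (le_of_not_ge h)]
    rw [heq, ← hfx]
    exact hfu σ' (subset_convexHull ℝ _ hσ'S)
  have hu0 : 0 < u := by
    have := hσS 0 N.hS0
    simpa using this
  refine ⟨fun e => gp e / u, ⟨fun e => div_nonneg (le_max_right _ _) hu0.le, ?_⟩, ?_⟩
  · intro σ hσ
    have : ∑ e, gp e / u * σ e = (∑ e, gp e * σ e) / u := by
      rw [Finset.sum_div]; congr 1; ext e; ring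
    rw [this]
    exact (div_le_one hu0).2 (hσS σ hσ).le
  · have h1 : u < ∑ e, x e * gp e := by
      have h2 : ∑ e, g e * x e ≤ ∑ e, x e * gp e := by
        apply Finset.sum_le_sum
        intro e _
        rw [mul_comm]
        exact mul_le_mul_of_nonneg_left (le_max_left _ _) (hx0 e)
      rw [← hfx] at h2
      linarith
    have : ∑ e, x e * (gp e / u) = (∑ e, x e * gp e) / u := by
      rw [Finset.sum_div]; congr 1; ext e; ring
    rw [this]
    exact (one_lt_div hu0).2 h1

lemma convexHull_S_subset_LamSet : convexHull ℝ (↑N.S : Set (E → ℝ)) ⊆ N.LamSet := by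
  intro l hl
  rw [Finset.convexHull_eq] at hl
  obtain ⟨w, hw0, hw1, hwc⟩ := hl
  have hc : ∀ e, l e = ∑ σ ∈ N.S, w σ * σ e := by
    intro e
    rw [← hwc, Finset.centerMass, hw1]
    simp [Finset.sum_apply]
  set s : (E → ℝ) → ℝ := fun σ => if σ ∈ N.S then w σ else 0 with hs
  refine ⟨fun e => ?_, s, fun σ => ?_, fun e => ?_, ?_⟩
  · rw [hc e]
    exact Finset.sum_nonneg fun σ hσ => mul_nonneg (hw0 σ hσ) (N.sigma_nonneg hσ e)
  · by_cases h : σ ∈ N.S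
    · simp [hs, h, hw0 σ h]
    · simp [hs, h]
  · rw [hc e]
    apply le_of_eq
    apply Finset.sum_congr rfl
    intro σ hσ; simp [hs, hσ]
  · rw [show ∑ σ ∈ N.S, s σ = ∑ σ ∈ N.S, w σ from
      Finset.sum_congr rfl fun σ hσ => by simp [hs, hσ], hw1]

lemma mem_LamSet_of_dual {l : E → ℝ} (hl0 : ∀ e, 0 ≤ l e)
    (h : ∀ ζ : E → ℝ, N.dualFeasible ζ → ∑ e, l e * ζ e ≤ 1) : l ∈ N.LamSet := by
  apply N.convexHull_S_subset_LamSet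
  by_contra hl
  obtain ⟨ζ, hζ, hgt⟩ := N.exists_dual_gt hl0 hl
  exact absurd (h ζ hζ) (not_le.2 hgt)

lemma not_LamSet_of_gt_one (hcrit : N.Leff = 1) {c : ℝ} (hc : 1 < c) :
    c • N.lamv ∉ N.LamSet := by
  rintro ⟨_, s, hs0, hfeas, hsum⟩
  have hc0 : 0 < c := lt_trans one_pos hc
  have hfeas' : ∀ e, N.lamv e ≤ N.PiV (fun σ => c⁻¹ * s σ) e := by
    intro e
    have h1 : c * N.lamv e ≤ N.PiV s e := by simpa using hfeas e
    have : N.PiV (fun σ => c⁻¹ * s σ) e = c⁻¹ * N.PiV s e := by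
      simp only [PiV, Finset.mul_sum]; congr 1; ext σ; ring
    rw [this]
    rw [show N.lamv e = c⁻¹ * (c * N.lamv e) by field_simp]
    exact mul_le_mul_of_nonneg_left h1 (inv_nonneg.2 hc0.le)
  have hval : N.PRIMAL N.lamv ≤ c⁻¹ * ∑ σ ∈ N.S, s σ := by
    apply csInf_le (N.primal_bddBelow N.lamv)
    exact ⟨fun σ => c⁻¹ * s σ, fun σ => mul_nonneg (inv_nonneg.2 hc0.le) (hs0 σ),
      hfeas', by rw [Finset.mul_sum]⟩
  have h2 : c⁻¹ * ∑ σ ∈ N.S, s σ ≤ c⁻¹ := by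
    nth_rewrite 2 [show c⁻¹ = c⁻¹ * 1 by ring]
    exact mul_le_mul_of_nonneg_left hsum (inv_nonneg.2 hc0.le)
  have h3 : c⁻¹ < 1 := inv_lt_one_of_one_lt₀ hc
  have : N.Leff < 1 := by
    calc N.Leff = N.PRIMAL N.lamv := rfl
      _ ≤ c⁻¹ * ∑ σ ∈ N.S, s σ := hval
      _ ≤ c⁻¹ := h2
      _ < 1 := h3
  rw [hcrit] at this
  exact lt_irrefl _ this

lemma dual_bddAbove (hcrit : N.Leff = 1) :
    BddAbove { v | ∃ ζ : E → ℝ, N.dualFeasible ζ ∧ v = ∑ e, N.lamv e * ζ e } := by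
  refine ⟨1, fun v hv => ?_⟩
  obtain ⟨ζ, hζ, rfl⟩ := hv
  exact N.weak_duality hcrit hζ

lemma dual_set_nonempty :
    { v | ∃ ζ : E → ℝ, N.dualFeasible ζ ∧ v = ∑ e, N.lamv e * ζ e }.Nonempty := by
  refine ⟨0, 0, N.dualFeasible_zero, ?_⟩
  simp

lemma DUAL_le_one (hcrit : N.Leff = 1) : N.DUAL N.lamv ≤ 1 := by
  apply csSup_le N.dual_set_nonempty
  rintro v ⟨ζ, hζ, rfl⟩
  exact N.weak_duality hcrit hζ

lemma DUAL_eq_one (hcrit : N.Leff = 1) (hpos : ∀ e, 0 < N.lamv e) :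
    N.DUAL N.lamv = 1 := by
  refine le_antisymm (N.DUAL_le_one hcrit) ?_
  apply le_of_forall_lt
  intro c hc
  by_cases hc0 : c < 0
  · calc c < 0 := hc0
      _ ≤ N.DUAL N.lamv := le_csSup (N.dual_bddAbove hcrit) ⟨0, N.dualFeasible_zero, by simp⟩
  · push_neg at hc0
    set t : ℝ := (1 + c) / 2 with ht
    have htc : c < t := by rw [ht]; linarith
    have ht1 : t < 1 := by rw [ht]; linarith
    have ht0 : 0 < t := by rw [ht]; linarith
    have hinv : 1 < t⁻¹ := (one_lt_inv₀ ht0).2 ht1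
    have hnot : t⁻¹ • N.lamv ∉ N.LamSet := N.not_LamSet_of_gt_one hcrit hinv
    have hnot' : t⁻¹ • N.lamv ∉ convexHull ℝ (↑N.S : Set (E → ℝ)) :=
      fun h => hnot (N.convexHull_S_subset_LamSet h)
    obtain ⟨ζ, hζ, hgt⟩ := N.exists_dual_gt
      (fun e => by
        have := (hpos e).le
        simp only [Pi.smul_apply, smul_eq_mul]
        positivity) hnot'
    have h2 : t < ∑ e, N.lamv e * ζ e := by
      have h3 : ∑ e, (t⁻¹ • N.lamv) e * ζ e = t⁻¹ * ∑ e, N.lamv e * ζ e := by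
        rw [Finset.mul_sum]; congr 1; ext e; simp [Pi.smul_apply]; ring
      rw [h3] at hgt
      calc t = t * 1 := by ring
        _ < t * (t⁻¹ * ∑ e, N.lamv e * ζ e) := by
            exact (mul_lt_mul_iff_right₀ ht0).2 hgt
        _ = ∑ e, N.lamv e * ζ e := by field_simp
    calc c < t := htc
      _ < ∑ e, N.lamv e * ζ e := h2
      _ ≤ N.DUAL N.lamv := le_csSup (N.dual_bddAbove hcrit) ⟨ζ, hζ, rfl⟩

lemma isUnit_det_one_sub_Rt : IsUnit (1 - N.R.transpose).det := by
  have h1 : IsNilpotent N.R.transpose := by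
    obtain ⟨k, hk⟩ := N.hRnil
    exact ⟨k, by rw [← Matrix.transpose_pow, hk, Matrix.transpose_zero]⟩
  exact (Matrix.isUnit_iff_isUnit_det _).1 h1.isUnit_one_sub

lemma Xi_mulVec_one_sub (v : E → ℝ) : N.Xi *ᵥ ((1 - N.R.transpose) *ᵥ v) = v := by
  rw [Matrix.mulVec_mulVec, Xi, Matrix.nonsing_inv_mul _ N.isUnit_det_one_sub_Rt,
    Matrix.one_mulVec]

lemma one_sub_mulVec_Xi (v : E → ℝ) : (1 - N.R.transpose) *ᵥ (N.Xi *ᵥ v) = v := by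
  rw [Matrix.mulVec_mulVec, Xi, Matrix.mul_nonsing_inv _ N.isUnit_det_one_sub_Rt,
    Matrix.one_mulVec]

lemma workload_diff (ζ : E → ℝ) (n n' : F → ℝ) (q q' : E → ℝ) :
    N.workload ζ n' q' - N.workload ζ n q =
      ∑ e, ζ e * (N.Xi *ᵥ ((q' - q) + N.Gam *ᵥ fun f => (n' f - n f) / N.μ f)) e := by
  have key : (q' + N.Gam *ᵥ fun f => n' f / N.μ f) =
      (q + N.Gam *ᵥ fun f => n f / N.μ f) +
        ((q' - q) + N.Gam *ᵥ fun f => (n' f - n f) / N.μ f) := by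
    have h1 : (fun f => n' f / N.μ f) =
        (fun f => n f / N.μ f) + fun f => (n' f - n f) / N.μ f := by
      ext f
      simp only [Pi.add_apply]
      rw [← add_div]
      ring_nf
    rw [h1, Matrix.mulVec_add]
    ext e
    simp only [Pi.add_apply, Pi.sub_apply]
    ring
  simp only [workload, key, Matrix.mulVec_add, Pi.add_apply, mul_add, Finset.sum_add_distrib]
  ring

lemma exists_eps (hcrit : N.Leff = 1) (hpos : ∀ e, 0 < N.lamv e) (u : E → ℝ)
    (hu : ∀ ζ ∈ N.CRstar, 0 ≤ ∑ e, ζ e * u e) :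
    ∃ ε : ℝ, 0 < ε ∧ ∀ ζ : E → ℝ, N.dualFeasible ζ →
      ∑ e, N.lamv e * ζ e - ε * ∑ e, ζ e * u e ≤ 1 := by
  classical
  set Zs : Set (E → ℝ) := {ζ | N.dualFeasible ζ} with hZs
  set a : (E ⊕ {σ // σ ∈ N.S}) → E → ℝ :=
    Sum.elim (fun e => fun e' => if e' = e then (-1:ℝ) else 0) (fun σ => σ.1) with ha
  set b : (E ⊕ {σ // σ ∈ N.S}) → ℝ := Sum.elim (fun _ => 0) (fun _ => 1) with hb
  have hsingle : ∀ (x : E → ℝ) (e : E),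
      ∑ e', (if e' = e then (-1:ℝ) else 0) * x e' = - x e := by
    intro x e
    simp [ite_mul]
  have hZeq : Zs = {x : E → ℝ | ∀ i, ∑ e, a i e * x e ≤ b i} := by
    ext x
    constructor
    · rintro ⟨hx0, hx1⟩ i
      cases i with
      | inl e =>
        simp only [ha, hb, Sum.elim_inl]
        rw [hsingle x e]
        simpa using hx0 e
      | inr σ =>
        simp only [ha, hb, Sum.elim_inr]
        have h := hx1 σ.1 σ.2
        calc ∑ e, σ.1 e * x e = ∑ e, x e * σ.1 e := by
              congr 1; ext e; ring
          _ ≤ 1 := h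
    · intro hx
      constructor
      · intro e
        have := hx (Sum.inl e)
        simp only [ha, hb, Sum.elim_inl] at this
        rw [hsingle x e] at this
        linarith
      · intro σ hσ
        have h := hx (Sum.inr ⟨σ, hσ⟩)
        simp only [ha, hb, Sum.elim_inr] at h
        calc ∑ e, x e * σ e = ∑ e, σ e * x e := by
              congr 1; ext e; ring
          _ ≤ 1 := h
  have hVfin : (Set.extremePoints ℝ Zs).Finite := by
    rw [hZeq]; exact extremePoints_polyhedron_finite a b
  have hiInter : {x : E → ℝ | ∀ i, ∑ e, a i e * x e ≤ b i} =
      ⋂ i, {x : E → ℝ | ∑ e, a i e * x e ≤ b i} := by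
    ext x; simp [Set.mem_iInter]
  have hlin : ∀ i, IsLinearMap ℝ (fun x : E → ℝ => ∑ e, a i e * x e) := by
    intro i
    refine ⟨fun x y => ?_, fun c x => ?_⟩
    · simp only [Pi.add_apply, mul_add]
      exact Finset.sum_add_distrib
    · simp only [Pi.smul_apply, smul_eq_mul, Finset.mul_sum]
      congr 1; ext e; ring
  have hZconv : Convex ℝ Zs := by
    rw [hZeq, hiInter]
    exact convex_iInter fun i => convex_halfSpace_le (hlin i) _
  have hZclosed : IsClosed Zs := by
    rw [hZeq, hiInter]
    refine isClosed_iInter fun i => ?_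
    exact isClosed_le (continuous_finset_sum _ fun e _ =>
      continuous_const.mul (continuous_apply e)) continuous_const
  have hZcomp : IsCompact Zs := by
    apply IsCompact.of_isClosed_subset
      (isCompact_univ_pi fun _ : E => isCompact_Icc (a := (0:ℝ)) (b := 1)) hZclosed
    intro ζ hζ
    rw [Set.mem_univ_pi]
    intro e
    refine ⟨hζ.1 e, ?_⟩
    have h1 := hζ.2 _ (N.hSsingle e)
    have h2 : ∑ e', ζ e' * (if e' = e then (1:ℝ) else 0) = ζ e := by
      simp [mul_ite]
    rwa [h2] at h1
  have hKM : closure (convexHull ℝ (Set.extremePoints ℝ Zs)) = Zs :=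
    closure_convexHull_extremePoints hZcomp hZconv
  have hper : ∀ v ∈ Set.extremePoints ℝ Zs, ∃ ε : ℝ, 0 < ε ∧
      ∀ ε' : ℝ, 0 ≤ ε' → ε' ≤ ε → ∑ e, N.lamv e * v e - ε' * ∑ e, v e * u e ≤ 1 := by
    intro v hv
    have hvZ : v ∈ Zs := hv.1
    have hφ : ∑ e, N.lamv e * v e ≤ 1 := N.weak_duality hcrit hvZ
    by_cases hψ : 0 ≤ ∑ e, v e * u e
    · exact ⟨1, one_pos, fun ε' h0 h1 => by nlinarith⟩
    · push_neg at hψ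
      have hφlt : ∑ e, N.lamv e * v e < 1 := by
        rcases lt_or_eq_of_le hφ with h | h
        · exact h
        · exfalso
          have hD : N.DUAL N.lamv = 1 := N.DUAL_eq_one hcrit hpos
          have hvCR : v ∈ N.CR := ⟨hvZ, by rw [h, hD]⟩
          have hvCRs : v ∈ N.CRstar := by
            show v ∈ Set.extremePoints ℝ N.CR
            rw [mem_extremePoints]
            exact ⟨hvCR, fun x₁ h₁ x₂ h₂ hseg => ⟨hv.2 h₁.1 h₂.1 hseg,
              hv.2 h₂.1 h₁.1 (by rw [openSegment_symm]; exact hseg)⟩⟩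
          exact absurd (hu v hvCRs) (not_le.2 hψ)
      refine ⟨(1 - ∑ e, N.lamv e * v e) / (- ∑ e, v e * u e),
        div_pos (by linarith) (by linarith), ?_⟩
      intro ε' h0 h1
      have h2 : ε' * (- ∑ e, v e * u e) ≤ 1 - ∑ e, N.lamv e * v e :=
        (le_div_iff₀ (by linarith)).1 h1
      nlinarith
  choose! εf hεfpos hεfspec using hper
  set Vf : Finset (E → ℝ) := hVfin.toFinset with hVf
  set ε₀ : ℝ := (insert (1:ℝ) (Vf.image εf)).min' (Finset.insert_nonempty _ _) with hε₀
  have hε₀pos : 0 < ε₀ := by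
    have hmem := Finset.min'_mem (insert (1:ℝ) (Vf.image εf)) (Finset.insert_nonempty _ _)
    rw [← hε₀] at hmem
    rcases Finset.mem_insert.1 hmem with h | h
    · rw [h]; exact one_pos
    · obtain ⟨v, hv, hveq⟩ := Finset.mem_image.1 h
      rw [← hveq]
      exact hεfpos v (hVfin.mem_toFinset.1 hv)
  have hε₀le : ∀ v ∈ Set.extremePoints ℝ Zs, ε₀ ≤ εf v := by
    intro v hv
    exact Finset.min'_le _ _ (Finset.mem_insert_of_mem
      (Finset.mem_image_of_mem _ (hVfin.mem_toFinset.2 hv)))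
  set A : Set (E → ℝ) :=
    {w : E → ℝ | ∑ e, N.lamv e * w e - ε₀ * ∑ e, w e * u e ≤ 1} with hA
  have hAlin : IsLinearMap ℝ
      (fun w : E → ℝ => ∑ e, N.lamv e * w e - ε₀ * ∑ e, w e * u e) := by
    refine ⟨fun x y => ?_, fun c x => ?_⟩
    · simp only [Pi.add_apply, mul_add, add_mul, Finset.sum_add_distrib]
      ring
    · have h1 : ∑ e, N.lamv e * (c • x) e = c * ∑ e, N.lamv e * x e := by
        rw [Finset.mul_sum]; congr 1; ext e
        simp only [Pi.smul_apply, smul_eq_mul]; ring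
      have h2 : ∑ e, (c • x) e * u e = c * ∑ e, x e * u e := by
        rw [Finset.mul_sum]; congr 1; ext e
        simp only [Pi.smul_apply, smul_eq_mul]; ring
      simp only [smul_eq_mul, h1, h2]
      ring
  have hAconv : Convex ℝ A := convex_halfSpace_le hAlin _
  have hAclosed : IsClosed A := by
    apply isClosed_le _ continuous_const
    apply Continuous.sub
    · exact continuous_finset_sum _ fun e _ => continuous_const.mul (continuous_apply e)
    · exact continuous_const.mul (continuous_finset_sum _ fun e _ =>
        (continuous_apply e).mul continuous_const)
  have hVA : Set.extremePoints ℝ Zs ⊆ A := by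
    intro v hv
    exact hεfspec v hv ε₀ hε₀pos.le (hε₀le v hv)
  have hZA : Zs ⊆ A := by
    rw [← hKM]
    exact closure_minimal (convexHull_min hVA hAconv) hAclosed
  exact ⟨ε₀, hε₀pos, fun ζ hζ => hZA hζ⟩


end Network


/-- Equivalence of the feasible sets of `ALGP(n,q)` and
`bALGD(n,q)` in a critically loaded system with `ΞΓρ > 0`. -/
theorem ALGP_feasible_iff_bALGD_feasible
    {E F : Type*} [Fintype E] [Fintype F] [DecidableEq E]
    (N : Network E F) (hcrit : N.Leff = 1) (hpos : ∀ e, 0 < N.lamv e)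
    (n : F → ℝ) (q : E → ℝ) (hn : ∀ f, 0 ≤ n f) (hq : ∀ e, 0 ≤ q e)
    (n' : F → ℝ) (q' : E → ℝ) (hn' : ∀ f, 0 ≤ n' f) (hq' : ∀ e, 0 ≤ q' e) :
    (∃ t : ℝ, 0 ≤ t ∧ ∃ x : F → ℝ, (∀ f, x f ∈ Set.Icc (0 : ℝ) N.C) ∧
      ∃ σ ∈ N.LamSet,
        (∀ f, n' f = n f + t * (N.ν f - N.μ f * x f)) ∧
        (∀ e, q' e = q e + t * ((N.Gam *ᵥ x) e - ((1 - N.R.transpose) *ᵥ σ) e)))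
    ↔ (∀ ζ ∈ N.CRstar, N.workload ζ n q ≤ N.workload ζ n' q') := by
  constructor
  · rintro ⟨t, ht, x, hx, σ, hσΛ, hn'eq, hq'eq⟩ ζ hζs
    have hζCR : ζ ∈ N.CR := hζs.1
    have hζf : N.dualFeasible ζ := hζCR.1
    have hdiff := N.workload_diff ζ n n' q q'
    have hq'q : q' - q = t • (N.Gam *ᵥ x - (1 - N.R.transpose) *ᵥ σ) := by
      funext e
      simp only [Pi.sub_apply, Pi.smul_apply, Pi.sub_apply, smul_eq_mul]
      rw [hq'eq e]
      ring
    have hnd : (fun f => (n' f - n f) / N.μ f) = t • (N.rho - x) := by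
      funext f
      have hμ := (N.hμ0 f).ne'
      simp only [Pi.smul_apply, Pi.sub_apply, smul_eq_mul, Network.rho]
      rw [hn'eq f]
      field_simp
      ring
    have hvec : ((q' - q) + N.Gam *ᵥ fun f => (n' f - n f) / N.μ f)
        = t • (N.Gam *ᵥ N.rho - (1 - N.R.transpose) *ᵥ σ) := by
      rw [hq'q, hnd, Matrix.mulVec_smul, Matrix.mulVec_sub]
      ext e
      simp only [Pi.add_apply, Pi.smul_apply, Pi.sub_apply, smul_eq_mul]
      ring
    have hXi : N.Xi *ᵥ (t • (N.Gam *ᵥ N.rho - (1 - N.R.transpose) *ᵥ σ))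
        = t • (N.lamv - σ) := by
      rw [Matrix.mulVec_smul, Matrix.mulVec_sub, N.Xi_mulVec_one_sub]
      rfl
    have hsum : N.workload ζ n' q' - N.workload ζ n q
        = t * (∑ e, ζ e * N.lamv e - ∑ e, ζ e * σ e) := by
      rw [hdiff, hvec, hXi, ← Finset.sum_sub_distrib, Finset.mul_sum]
      apply Finset.sum_congr rfl
      intro e _
      simp only [Pi.smul_apply, Pi.sub_apply, smul_eq_mul]
      ring
    have h1 : ∑ e, ζ e * N.lamv e = 1 := by
      have hopt := hζCR.2
      rw [N.DUAL_eq_one hcrit hpos] at hopt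
      rw [← hopt]
      exact Finset.sum_congr rfl fun e _ => mul_comm _ _
    have h2 : ∑ e, ζ e * σ e ≤ 1 := by
      have h3 := N.LamSet_pair_le hζf hσΛ
      calc ∑ e, ζ e * σ e = ∑ e, σ e * ζ e := Finset.sum_congr rfl fun e _ => mul_comm _ _
        _ ≤ 1 := h3
    nlinarith [mul_nonneg ht (sub_nonneg.2 (h2.trans h1.ge))]
  · intro hfeas
    set d : F → ℝ := fun f => (n' f - n f) / N.μ f with hd
    set D : E → ℝ := (q' - q) + N.Gam *ᵥ d with hDdef
    set u : E → ℝ := N.Xi *ᵥ D with hudef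
    have hwu : ∀ ζ : E → ℝ, N.workload ζ n' q' - N.workload ζ n q = ∑ e, ζ e * u e :=
      fun ζ => N.workload_diff ζ n n' q q'
    have hu' : ∀ ζ ∈ N.CRstar, 0 ≤ ∑ e, ζ e * u e := by
      intro ζ hζ
      rw [← hwu ζ]
      linarith [hfeas ζ hζ]
    obtain ⟨ε₀, hε₀, hkey⟩ := N.exists_eps hcrit hpos u hu'
    have hev : ∀ᶠ t : ℝ in atTop, (1 ≤ t) ∧ (1/t ≤ ε₀) ∧
        (∀ f, 0 ≤ N.rho f - (n' f - n f) / (t * N.μ f) ∧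
          N.rho f - (n' f - n f) / (t * N.μ f) ≤ N.C) ∧
        (∀ e, 0 ≤ N.lamv e - u e / t) := by
      refine (eventually_ge_atTop 1).and (.and ?_ (.and ?_ ?_))
      · have h0 : Tendsto (fun t : ℝ => 1/t) atTop (nhds 0) := by
          simpa [one_div] using tendsto_inv_atTop_zero
        exact h0.eventually_le_const hε₀
      · rw [eventually_all]
        intro f
        have hμ := N.hμ0 f
        have hρ0 : 0 < N.rho f := div_pos (N.hν f) hμ
        have hρC : N.rho f < N.C := N.hC f
        have htend : Tendsto (fun t : ℝ => (n' f - n f) / (t * N.μ f)) atTop (nhds 0) := by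
          have h1 : (fun t : ℝ => (n' f - n f) / (t * N.μ f))
              = fun t : ℝ => ((n' f - n f) / N.μ f) * (1/t) := by
            funext t
            field_simp
          rw [h1]
          have h2 : Tendsto (fun t : ℝ => 1/t) atTop (nhds 0) := by
            simpa [one_div] using tendsto_inv_atTop_zero
          simpa using h2.const_mul ((n' f - n f) / N.μ f)
        have hA := htend.eventually_lt_const hρ0
        have hB := htend.eventually_const_lt (show N.rho f - N.C < 0 by linarith)
        filter_upwards [hA, hB] with t hA hB
        constructor <;> linarith
      · rw [eventually_all]
        intro e
        have htend : Tendsto (fun t : ℝ => u e / t) atTop (nhds 0) := by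
          simpa [div_eq_mul_inv] using tendsto_inv_atTop_zero.const_mul (u e)
        have := htend.eventually_lt_const (hpos e)
        filter_upwards [this] with t h
        linarith
    obtain ⟨t, ht1, htε, hxIcc, hσ0⟩ := hev.exists
    have ht0 : (0:ℝ) < t := lt_of_lt_of_le one_pos ht1
    have htne : t ≠ 0 := ht0.ne'
    set x : F → ℝ := fun f => N.rho f - (n' f - n f) / (t * N.μ f) with hxdef
    set σv : E → ℝ := fun e => N.lamv e - u e / t with hσvdef
    refine ⟨t, ht0.le, x, fun f => Set.mem_Icc.2 ⟨(hxIcc f).1, (hxIcc f).2⟩, σv, ?_, ?_, ?_⟩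
    · -- σv ∈ LamSet
      apply N.mem_LamSet_of_dual
      · intro e
        exact hσ0 e
      · intro ζ hζ
        have hsplit : ∑ e, σv e * ζ e
            = ∑ e, N.lamv e * ζ e - (1/t) * ∑ e, ζ e * u e := by
          rw [Finset.mul_sum, ← Finset.sum_sub_distrib]
          apply Finset.sum_congr rfl
          intro e _
          simp only [hσvdef]
          ring
        rw [hsplit]
        have hwk := N.weak_duality hcrit hζ
        have hk := hkey ζ hζ
        have htinv : 0 < 1/t := by positivity
        rcases le_or_gt 0 (∑ e, ζ e * u e) with hs | hs
        · nlinarith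
        · nlinarith [mul_le_mul_of_nonneg_right htε (neg_nonneg.2 hs.le)]
    · -- n' equation
      intro f
      have hμ := (N.hμ0 f).ne'
      simp only [hxdef, Network.rho]
      field_simp
      ring
    · -- q' equation
      have hxv : x = N.rho - (1/t) • d := by
        funext f
        have hμ := (N.hμ0 f).ne'
        simp only [hxdef, Pi.sub_apply, Pi.smul_apply, smul_eq_mul, hd]
        field_simp
      have hσvv : σv = N.lamv - (1/t) • u := by
        funext e
        simp only [hσvdef, Pi.sub_apply, Pi.smul_apply, smul_eq_mul]
        ring
      have hvec : N.Gam *ᵥ x - (1 - N.R.transpose) *ᵥ σv = (1/t) • (q' - q) := by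
        rw [hxv, hσvv, Matrix.mulVec_sub, Matrix.mulVec_sub, Matrix.mulVec_smul,
          Matrix.mulVec_smul]
        rw [show (1 - N.R.transpose) *ᵥ N.lamv = N.Gam *ᵥ N.rho from
          N.one_sub_mulVec_Xi (N.Gam *ᵥ N.rho)]
        rw [show (1 - N.R.transpose) *ᵥ u = D from N.one_sub_mulVec_Xi D]
        rw [hDdef]
        ext e
        simp only [Pi.sub_apply, Pi.smul_apply, Pi.add_apply, smul_eq_mul]
        ring
      intro e
      have hce := congrFun hvec e
      simp only [Pi.sub_apply, Pi.smul_apply, smul_eq_mul] at hce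
      rw [hce]
      field_simp
      ring
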